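/- arXiv:1912.10574 — 2 statements merged into one kernel-verified Lean document; each statement's English description precedes it below -/
import Mathlib

section
/- Let a < b be real numbers, let μ be an integrable function on ℝ, and let h be a real-valued C¹ function on ℝ. Then |∫_a^b μ(t) e^{i h(t)} dt − e^{i h(b)} ∫_a^b μ(t) dt| ≤ ‖μ‖_{L¹[a,b]} · ‖h'‖_{L^∞[a,b]} · (b − a). -/
open MeasureTheory Complex

/-- integration-by-parts approximation of an oscillatory integral. -/
theorem stmt0 (a b : ℝ) (hab : a < b) (μ : ℝ → ℝ) (hμ : Integrable μ)
    (h : ℝ → ℝ) (hh : ContDiff ℝ 1 h) :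
    ‖(∫ t in a..b, (μ t : ℂ) * Complex.exp (Complex.I * h t)) -
        Complex.exp (Complex.I * h b) * ∫ t in a..b, (μ t : ℂ)‖ ≤
      (∫ t in a..b, |μ t|) * (⨆ t : Set.Icc a b, |deriv h t|) * (b - a) := by
  have hab' : a ≤ b := hab.le
  set M : ℝ := ⨆ t : Set.Icc a b, |deriv h t| with hM
  have hdc : Continuous (deriv h) := hh.continuous_deriv le_rfl
  have hbdd : BddAbove (Set.range fun t : Set.Icc a b => |deriv h (t : ℝ)|) := by
    obtain ⟨C, hC⟩ := isCompact_Icc.exists_bound_of_continuousOn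
      (hdc.abs.continuousOn (s := Set.Icc a b))
    refine ⟨C, ?_⟩
    rintro x ⟨t, rfl⟩
    simpa using hC t t.2
  have hMle : ∀ s ∈ Set.Icc a b, |deriv h s| ≤ M := fun s hs =>
    le_ciSup hbdd (⟨s, hs⟩ : Set.Icc a b)
  have hM0 : 0 ≤ M := le_trans (abs_nonneg _) (hMle a ⟨le_rfl, hab'⟩)
  set g : ℝ → ℂ := fun s => Complex.exp (Complex.I * h s) with hg
  have hgd : ∀ s : ℝ, HasDerivAt g (Complex.I * deriv h s * Complex.exp (Complex.I * h s)) s := by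
    intro s
    have h1 : HasDerivAt h (deriv h s) s := (hh.differentiable one_ne_zero s).hasDerivAt
    have h2 := h1.ofReal_comp
    have h3 := h2.const_mul Complex.I
    simpa [hg, mul_comm, mul_assoc, mul_left_comm] using h3.cexp
  have hgnorm : ∀ s : ℝ, ‖g s‖ = 1 := by
    intro s
    simp [hg, Complex.norm_exp]
  have key : ∀ t ∈ Set.Icc a b, ‖g t - g b‖ ≤ M * (b - a) := by
    intro t ht
    have hineq : ‖g t - g b‖ ≤ M * ‖t - b‖ := by
      refine (convex_Icc a b).norm_image_sub_le_of_norm_hasDerivWithin_le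
        (f' := fun s => Complex.I * deriv h s * Complex.exp (Complex.I * h s))
        (fun s _ => (hgd s).hasDerivWithinAt) ?_ ⟨hab', le_rfl⟩ ht
      intro s hs
      have he : ‖Complex.I * deriv h s * Complex.exp (Complex.I * h s)‖ = |deriv h s| := by
        rw [norm_mul, norm_mul, Complex.norm_I, one_mul, hgnorm s, mul_one]
        simp
      rw [he]
      exact hMle s hs
    refine hineq.trans ?_
    apply mul_le_mul_of_nonneg_left _ hM0
    rw [Real.norm_eq_abs, abs_sub_comm, _root_.abs_of_nonneg (sub_nonneg.2 ht.2)]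
    linarith [ht.1]
  have hμc : IntervalIntegrable (fun t => (μ t : ℂ)) volume a b :=
    (hμ.ofReal).intervalIntegrable
  have hint1 : IntervalIntegrable (fun t => (μ t : ℂ) * g t) volume a b :=
    hμc.mul_continuousOn ((Complex.continuous_exp.comp
      (continuous_const.mul (Complex.continuous_ofReal.comp hh.continuous))).continuousOn)
  have hint2 : IntervalIntegrable (fun t => (μ t : ℂ) * g b) volume a b :=
    hμc.mul_const _
  have hrw : (∫ t in a..b, (μ t : ℂ) * Complex.exp (Complex.I * h t)) -
      Complex.exp (Complex.I * h b) * ∫ t in a..b, (μ t : ℂ) =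
      ∫ t in a..b, (μ t : ℂ) * (g t - g b) := by
    have : ∫ t in a..b, (μ t : ℂ) * (g t - g b) =
        (∫ t in a..b, (μ t : ℂ) * g t) - ∫ t in a..b, (μ t : ℂ) * g b := by
      simp_rw [mul_sub]
      exact intervalIntegral.integral_sub hint1 hint2
    rw [this, intervalIntegral.integral_mul_const]
    simp only [hg]
    ring
  rw [hrw]
  calc ‖∫ t in a..b, (μ t : ℂ) * (g t - g b)‖
      ≤ ∫ t in a..b, ‖(μ t : ℂ) * (g t - g b)‖ :=
        intervalIntegral.norm_integral_le_integral_norm hab'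
    _ ≤ ∫ t in a..b, |μ t| * (M * (b - a)) := by
        apply intervalIntegral.integral_mono_on hab'
        · have := (hint1.sub hint2).norm
          simpa [mul_sub] using this
        · exact hμ.abs.intervalIntegrable.mul_const _
        · intro t ht
          rw [norm_mul, Complex.norm_real, Real.norm_eq_abs]
          exact mul_le_mul_of_nonneg_left (key t ht) (abs_nonneg _)
    _ = (∫ t in a..b, |μ t|) * M * (b - a) := by
        rw [intervalIntegral.integral_mul_const]; ring
end

section
/- Let f : ℝ → ℂ be Lebesgue integrable on [a,b] and let α be a real number. Then |∫_a^b f(t) e^{iα t²} dt − ∫_a^b f(t) dt · e^{iα b²}| ≤ 2|α| max(|a|,|b|) (b−a) ∫_a^b |f(t)| dt. -/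
open MeasureTheory Complex

lemma lipschitz_exp_I (x y : ℝ) :
    ‖Complex.exp (Complex.I * x) - Complex.exp (Complex.I * y)‖ ≤ |x - y| := by
  have hderiv : ∀ t : ℝ, HasDerivAt (fun s : ℝ => Complex.exp (Complex.I * s))
      (Complex.I * Complex.exp (Complex.I * t)) t := by
    intro t
    have h1 : HasDerivAt (fun z : ℂ => Complex.exp (Complex.I * z))
        (Complex.I * Complex.exp (Complex.I * (t : ℂ))) (t : ℂ) := by
      have := ((hasDerivAt_id (t : ℂ)).const_mul Complex.I).cexp
      simpa [mul_comm] using this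
    exact h1.comp_ofReal
  have hbound : ∀ t ∈ (Set.univ : Set ℝ),
      ‖Complex.I * Complex.exp (Complex.I * t)‖ ≤ 1 := by
    intro t _
    rw [norm_mul, Complex.norm_I, one_mul, mul_comm]
    rw [Complex.norm_exp_ofReal_mul_I]
  have := convex_univ.norm_image_sub_le_of_norm_hasDerivWithin_le
    (fun t _ => (hderiv t).hasDerivWithinAt) hbound (Set.mem_univ y) (Set.mem_univ x)
  simpa [Real.norm_eq_abs] using this

set_option maxHeartbeats 1000000 in
/-- removal of a quadratic phase from an integral. -/
theorem stmt18 (a b α : ℝ) (hab : a ≤ b) (f : ℝ → ℂ)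
    (hf : IntegrableOn f (Set.Icc a b)) :
    ‖(∫ t in a..b, f t * Complex.exp (Complex.I * (α * t ^ 2))) -
        (∫ t in a..b, f t) * Complex.exp (Complex.I * (α * b ^ 2))‖ ≤
      2 * |α| * max |a| |b| * (b - a) * ∫ t in a..b, ‖f t‖ := by
  set E : ℝ → ℂ := fun t => Complex.exp (Complex.I * (α * t ^ 2)) with hE
  set C : ℝ := 2 * |α| * max |a| |b| * (b - a) with hC
  have hCnn : 0 ≤ C := by
    apply mul_nonneg
    apply mul_nonneg
    · positivity
    · exact le_trans (abs_nonneg a) (le_max_left _ _)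
    · linarith
  have hfI : IntervalIntegrable f volume a b := by
    rw [intervalIntegrable_iff_integrableOn_Ioc_of_le hab]
    exact hf.mono_set Set.Ioc_subset_Icc_self
  have hfE : IntervalIntegrable (fun t => f t * E t) volume a b := by
    rw [intervalIntegrable_iff_integrableOn_Ioc_of_le hab]
    have : IntegrableOn (fun t => E t * f t) (Set.Ioc a b) volume := by
      apply Integrable.bdd_mul (c := 1) (hf.mono_set Set.Ioc_subset_Icc_self)
      · exact (Complex.continuous_exp.comp (by continuity)).aestronglyMeasurable
      · refine ae_of_all _ (fun t => ?_)
        rw [hE]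
        simp only
        rw [show Complex.I * ((α : ℂ) * (t : ℂ) ^ 2) = ((α * t ^ 2 : ℝ) : ℂ) * Complex.I by
          push_cast; ring, Complex.norm_exp_ofReal_mul_I]
    exact this.congr_fun (fun t _ => mul_comm _ _) measurableSet_Ioc
  -- pointwise bound
  have hEE : ∀ t : ℝ, E t = Complex.exp (Complex.I * ((α * t ^ 2 : ℝ) : ℂ)) := by
    intro t; rw [hE]; push_cast; ring_nf
  have hpt : ∀ t ∈ Set.Icc a b, ‖E t - E b‖ ≤ C := by
    intro t ht
    rw [hEE t, hEE b]
    refine le_trans (lipschitz_exp_I _ _) ?_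
    rw [show α * t ^ 2 - α * b ^ 2 = α * ((t + b) * (t - b)) by ring, abs_mul, abs_mul]
    have h1 : |t| ≤ max |a| |b| := abs_le.2 ⟨le_trans (neg_le_neg (le_max_left |a| |b|))
      (le_trans (neg_abs_le a) ht.1), le_trans ht.2 (le_trans (le_abs_self b) (le_max_right _ _))⟩
    have h2 : |t + b| ≤ 2 * max |a| |b| := by
      calc |t + b| ≤ |t| + |b| := abs_add_le _ _
        _ ≤ max |a| |b| + max |a| |b| := add_le_add h1 (le_max_right _ _)
        _ = 2 * max |a| |b| := by ring
    have h3 : |t - b| ≤ b - a := by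
      rw [abs_sub_comm, _root_.abs_of_nonneg (by linarith [ht.2])]
      linarith [ht.1]
    calc |α| * (|t + b| * |t - b|) ≤ |α| * (2 * max |a| |b| * (b - a)) := by
          apply mul_le_mul_of_nonneg_left _ (abs_nonneg α)
          exact mul_le_mul h2 h3 (abs_nonneg _) (by positivity)
      _ = C := by rw [hC]; ring
  -- combine integrals
  have key : (∫ t in a..b, f t * E t) - (∫ t in a..b, f t) * E b
      = ∫ t in a..b, f t * (E t - E b) := by
    rw [← intervalIntegral.integral_mul_const, ← intervalIntegral.integral_sub hfE
      (hfI.mul_const _)]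
    congr 1; ext t; ring
  rw [key]
  have hnorm := intervalIntegral.norm_integral_le_integral_norm
    (f := fun t => f t * (E t - E b)) (a := a) (b := b) (μ := volume) hab
  refine le_trans hnorm ?_
  have hsub : IntervalIntegrable (fun t => f t * (E t - E b)) volume a b := by
    simpa [mul_sub] using hfE.sub (hfI.mul_const (E b))
  have hint1 : IntervalIntegrable (fun t => ‖f t * (E t - E b)‖) volume a b := hsub.norm
  have hint2 : IntervalIntegrable (fun t => C * ‖f t‖) volume a b :=
    (hfI.norm.const_mul C)
  calc (∫ t in a..b, ‖f t * (E t - E b)‖)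
      ≤ ∫ t in a..b, C * ‖f t‖ := by
        apply intervalIntegral.integral_mono_on hab hint1 hint2
        intro t ht
        rw [norm_mul, mul_comm]
        exact mul_le_mul_of_nonneg_right (hpt t ht) (norm_nonneg _)
    _ = C * ∫ t in a..b, ‖f t‖ := intervalIntegral.integral_const_mul _ _
end
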